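/- Let G be a K₃-free (triangle-free) simple graph with m ≥ 1 edges. Then every edge of G is contained in at most (√m − 1)² 4-cycles of G; that is, c₄(G) ≤ (√m − 1)², where √m is the real square root. -/

import Mathlib

open Finset

variable {V : Type*}

/-- The number of proper colorings of `G` using the colors `{1, …, k}`. -/
noncomputable def propCol (G : SimpleGraph V) (k : ℕ) : ℕ :=
  Set.ncard {f : V → ℕ | (∀ v, f v ∈ Finset.Icc 1 k) ∧ ∀ ⦃a b : V⦄, G.Adj a b → f a ≠ f b}

/-- The number of `L`-colorings of `G`, for an assignment `L` of color lists. -/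
noncomputable def listCol (G : SimpleGraph V) (L : V → Finset ℕ) : ℕ :=
  Set.ncard {f : V → ℕ | (∀ v, f v ∈ L v) ∧ ∀ ⦃a b : V⦄, G.Adj a b → f a ≠ f b}

/-- `α(uv) = |L(u) \ L(v)|`, symmetrized (when `|L(u)| = |L(v)|` one has
`|L(u) \ L(v)| = |L(v) \ L(u)|`, so this is exactly `|L(u) \ L(v)|`). -/
noncomputable def alphaL (L : V → Finset ℕ) : Sym2 V → ℕ :=
  Sym2.lift ⟨fun a b => ((L a) \ (L b)).card ⊔ ((L b) \ (L a)).card,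
    fun a b => by simp [sup_comm]⟩

/-- `B` is the edge set of a broken cycle of `G` with respect to the edge ordering `η`:
the edge set of a path `v₁v₂⋯v_r` of `G` with `r ≥ 3` such that `v₁v_r ∈ E(G)` and
`η(v₁v_r) < η(v_iv_{i+1})` for each `i`. -/
def IsBrokenCycle [DecidableEq V] (G : SimpleGraph V) (η : Sym2 V → ℕ)
    (B : Finset (Sym2 V)) : Prop :=
  ∃ (u w : V) (p : G.Walk u w), p.IsPath ∧ 2 ≤ p.length ∧ G.Adj u w ∧
    (∀ f ∈ p.edges, η s(u, w) < η f) ∧ B = p.edges.toFinset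

/-- `NB_i(G)`: the collection of `i`-element subsets of `E(G)` containing no broken cycle. -/
def NBset [DecidableEq V] (G : SimpleGraph V) (η : Sym2 V → ℕ) (i : ℕ) :
    Set (Finset (Sym2 V)) :=
  {A : Finset (Sym2 V) | ↑A ⊆ G.edgeSet ∧ A.card = i ∧
    ∀ B : Finset (Sym2 V), IsBrokenCycle G η B → ¬ B ⊆ A}

/-- `|NB_i(G)|`. -/
noncomputable def NBcard [DecidableEq V] (G : SimpleGraph V) (η : Sym2 V → ℕ) (i : ℕ) : ℕ :=
  Set.ncard (NBset G η i)

/-- `|NB_i(G, e)|`: the number of `i`-element subsets of `E(G)` that contain `e`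
and contain no broken cycle. -/
noncomputable def NBe [DecidableEq V] (G : SimpleGraph V) (η : Sym2 V → ℕ)
    (i : ℕ) (e : Sym2 V) : ℕ :=
  Set.ncard {A : Finset (Sym2 V) | A ∈ NBset G η i ∧ e ∈ A}

/-- `Q_η(G, e, x)`, where `n` is the number of vertices of `G`. -/
noncomputable def Qeta [DecidableEq V] [Fintype V] (G : SimpleGraph V)
    (η : Sym2 V → ℕ) (e : Sym2 V) (x : ℝ) : ℝ :=
  (∑ i ∈ (Finset.Icc 1 (Fintype.card V - 1)).filter (fun i => Odd i),
      (NBe G η i e : ℝ) / i * x ^ (Fintype.card V - i)) -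
  ∑ i ∈ (Finset.Icc 2 (Fintype.card V - 1)).filter (fun i => Even i),
      (NBe G η i e : ℝ) * x ^ (Fintype.card V - i)

/-- The contraction `G/e` of the edge `e = uv`: the vertex `v` is merged into `u`
(so `v` becomes an isolated vertex), loops are removed and parallel edges are merged. -/
def contractE (G : SimpleGraph V) (u v : V) : SimpleGraph V :=
  SimpleGraph.fromRel (fun a b =>
    (G.Adj a b ∧ a ≠ v ∧ b ≠ v) ∨ (a = u ∧ b ≠ v ∧ G.Adj v b))

/-- The number of triangles (3-cliques) of `H`. -/
noncomputable def triangleCount (H : SimpleGraph V) : ℕ :=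
  Set.ncard {s : Finset V | H.IsNClique 3 s}

/-- `|NB₂(H)| = C(|E(H)|, 2) − △(H)`: the number of 2-element subsets of `E(H)`
containing no broken cycle (this count is independent of the edge ordering). -/
noncomputable def NB2 (H : SimpleGraph V) : ℕ :=
  Nat.choose (H.edgeSet.ncard) 2 - triangleCount H

/-- `C` is the edge set of a 4-cycle of `G`. -/
def IsFourCycle [DecidableEq V] (G : SimpleGraph V) (C : Finset (Sym2 V)) : Prop :=
  ∃ (u : V) (p : G.Walk u u), p.IsCycle ∧ p.length = 4 ∧ C = p.edges.toFinset

/-- The number of 4-cycles of `G` containing the edge `e`. -/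
noncomputable def fourCyclesOn [DecidableEq V] (G : SimpleGraph V) (e : Sym2 V) : ℕ :=
  Set.ncard {C : Finset (Sym2 V) | IsFourCycle G C ∧ e ∈ C}

/-- `c₄(G)`: the maximum over edges `e` of the number of 4-cycles of `G` containing `e`,
i.e. the least `r` such that every edge lies in at most `r` 4-cycles. -/
noncomputable def c4 [DecidableEq V] (G : SimpleGraph V) : ℕ :=
  sSup {r : ℕ | ∃ e ∈ G.edgeSet, r = fourCyclesOn G e}

/-- `β(T)` for the connected component `c` of `H`: the number of colors lying in every
list `L w` for `w` a vertex of the component `c`. -/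
noncomputable def betaComp (L : V → Finset ℕ) (H : SimpleGraph V)
    (c : H.ConnectedComponent) : ℕ :=
  Set.ncard {x : ℕ | ∀ w : V, H.connectedComponentMk w = c → x ∈ L w}

/-- `∏_j β(T_j)` over the connected components `T_j` of the spanning subgraph `H`. -/
noncomputable def betaProd (L : V → Finset ℕ) (H : SimpleGraph V) : ℕ :=
  ∏ᶠ c : H.ConnectedComponent, betaComp L H c


section Aux

lemma no_tri [DecidableEq V] {G : SimpleGraph V} (hfree : G.CliqueFree 3) {a b c : V}
    (hab : G.Adj a b) (hac : G.Adj a c) (hbc : G.Adj b c) : False :=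
  hfree {a, b, c} (SimpleGraph.is3Clique_triple_iff.2 ⟨hab, hac, hbc⟩)

set_option linter.unreachableTactic false in
set_option linter.unusedTactic false in
lemma quad_struct [DecidableEq V] {G : SimpleGraph V} {C : Finset (Sym2 V)} {u v : V}
    (hC : IsFourCycle G C) (he : s(u, v) ∈ C) :
    ∃ x y, G.Adj v x ∧ G.Adj u y ∧ G.Adj x y ∧ x ≠ u ∧ y ≠ v ∧
      C = {s(u, v), s(v, x), s(x, y), s(y, u)} := by
  obtain ⟨a, p, hcyc, hlen, rfl⟩ := hC
  match p, hlen, hcyc with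
  | .cons (v := b) h1 (.cons (v := c) h2 (.cons (v := d) h3 (.cons h4 .nil))), _, hcyc =>
    have hnd := hcyc.2
    simp [SimpleGraph.Walk.support, List.nodup_cons] at hnd
    obtain ⟨⟨n1, n2, n3⟩, ⟨n4, n5⟩, n6⟩ := hnd
    clear hcyc
    simp only [SimpleGraph.Walk.edges_cons, SimpleGraph.Walk.edges_nil, List.toFinset_cons,
      List.toFinset_nil, LawfulSingleton.insert_empty_eq] at he ⊢
    simp only [Finset.mem_insert, Finset.mem_singleton, Sym2.eq, Sym2.rel_iff',
      Prod.mk.injEq, Prod.swap_prod_mk] at he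
    rcases he with (⟨rfl, rfl⟩|⟨rfl, rfl⟩)|(⟨rfl, rfl⟩|⟨rfl, rfl⟩)|(⟨rfl, rfl⟩|⟨rfl, rfl⟩)|(⟨rfl, rfl⟩|⟨rfl, rfl⟩) <;>
    first
    | exact ⟨c, d, h2, h4.symm, h3,
        by first | assumption | (intro h; subst h; simp_all),
        by first | assumption | (intro h; subst h; simp_all),
        by ext f; simp [Sym2.eq_swap]; try tauto⟩
    | exact ⟨d, c, h4.symm, h2, h3.symm,
        by first | assumption | (intro h; subst h; simp_all),
        by first | assumption | (intro h; subst h; simp_all),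
        by ext f; simp [Sym2.eq_swap]; try tauto⟩
    | exact ⟨d, a, h3, h1.symm, h4,
        by first | assumption | (intro h; subst h; simp_all),
        by first | assumption | (intro h; subst h; simp_all),
        by ext f; simp [Sym2.eq_swap]; try tauto⟩
    | exact ⟨a, d, h1.symm, h3, h4.symm,
        by first | assumption | (intro h; subst h; simp_all),
        by first | assumption | (intro h; subst h; simp_all),
        by ext f; simp [Sym2.eq_swap]; try tauto⟩
    | exact ⟨a, b, h4, h2.symm, h1,
        by first | assumption | (intro h; subst h; simp_all),
        by first | assumption | (intro h; subst h; simp_all),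
        by ext f; simp [Sym2.eq_swap]; try tauto⟩
    | exact ⟨b, a, h2.symm, h4, h1.symm,
        by first | assumption | (intro h; subst h; simp_all),
        by first | assumption | (intro h; subst h; simp_all),
        by ext f; simp [Sym2.eq_swap]; try tauto⟩
    | exact ⟨b, c, h1, h3.symm, h2,
        by first | assumption | (intro h; subst h; simp_all),
        by first | assumption | (intro h; subst h; simp_all),
        by ext f; simp [Sym2.eq_swap]; try tauto⟩
    | exact ⟨c, b, h3.symm, h1, h2.symm,
        by first | assumption | (intro h; subst h; simp_all),
        by first | assumption | (intro h; subst h; simp_all),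
        by ext f; simp [Sym2.eq_swap]; try tauto⟩

lemma edge_bound [Fintype V] [DecidableEq V] (G : SimpleGraph V) [DecidableRel G.Adj]
    (m : ℕ) (hm : m = G.edgeFinset.card) (hm1 : 1 ≤ m) (hfree : G.CliqueFree 3)
    {u v : V} (huv : G.Adj u v) :
    (fourCyclesOn G s(u, v) : ℝ) ≤ (Real.sqrt m - 1) ^ 2 := by
  classical
  set A : Finset V := (G.neighborFinset v).erase u with hA
  set B : Finset V := (G.neighborFinset u).erase v with hB
  set T : Finset (V × V) := (A ×ˢ B).filter (fun p => G.Adj p.1 p.2) with hT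
  -- Step A : fourCyclesOn ≤ T.card
  have stepA : fourCyclesOn G s(u, v) ≤ T.card := by
    set f : Finset (Sym2 V) → V × V := fun C =>
      if h : ∃ x y, G.Adj v x ∧ G.Adj u y ∧ G.Adj x y ∧ x ≠ u ∧ y ≠ v ∧
          C = {s(u, v), s(v, x), s(x, y), s(y, u)} then
        (h.choose, h.choose_spec.choose) else (u, u) with hf
    have key : ∀ C ∈ {C : Finset (Sym2 V) | IsFourCycle G C ∧ s(u,v) ∈ C},
        G.Adj v (f C).1 ∧ G.Adj u (f C).2 ∧ G.Adj (f C).1 (f C).2 ∧ (f C).1 ≠ u ∧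
        (f C).2 ≠ v ∧ C = {s(u, v), s(v, (f C).1), s((f C).1, (f C).2), s((f C).2, u)} := by
      intro C hC
      have hex := quad_struct hC.1 hC.2
      have : f C = (hex.choose, hex.choose_spec.choose) := dif_pos hex
      rw [this]
      exact hex.choose_spec.choose_spec
    have hmaps : ∀ C ∈ {C : Finset (Sym2 V) | IsFourCycle G C ∧ s(u,v) ∈ C},
        f C ∈ (T : Set (V × V)) := by
      intro C hC
      obtain ⟨h1, h2, h3, h4, h5, h6⟩ := key C hC
      simp only [hT, coe_filter, Set.mem_setOf_eq, mem_product, hA, hB, mem_erase,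
        SimpleGraph.mem_neighborFinset]
      exact ⟨⟨⟨h4, h1⟩, ⟨h5, h2⟩⟩, h3⟩
    have hinj : Set.InjOn f {C : Finset (Sym2 V) | IsFourCycle G C ∧ s(u,v) ∈ C} := by
      intro C hC C' hC' hEq
      obtain ⟨_, _, _, _, _, h6⟩ := key C hC
      obtain ⟨_, _, _, _, _, h6'⟩ := key C' hC'
      rw [h6, h6', hEq]
    calc fourCyclesOn G s(u,v) ≤ (T : Set (V × V)).ncard :=
          Set.ncard_le_ncard_of_injOn f hmaps hinj (T.finite_toSet)
      _ = T.card := Set.ncard_coe_finset T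
  -- Step B : T.card ≤ A.card * B.card
  have stepB : T.card ≤ A.card * B.card := by
    calc T.card ≤ (A ×ˢ B).card := card_le_card (filter_subset _ _)
    _ = A.card * B.card := card_product A B
  -- Step C : A.card + B.card + 1 + T.card ≤ m
  have stepC : A.card + B.card + 1 + T.card ≤ m := by
    have hmemT : ∀ p ∈ T, G.Adj v p.1 ∧ p.1 ≠ u ∧ G.Adj u p.2 ∧ p.2 ≠ v ∧ G.Adj p.1 p.2 := by
      intro p hp
      simp only [hT, mem_filter, mem_product, hA, hB, mem_erase,
        SimpleGraph.mem_neighborFinset] at hp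
      exact ⟨hp.1.1.2, hp.1.1.1, hp.1.2.2, hp.1.2.1, hp.2⟩
    set T' : Finset (Sym2 V) := T.image (fun p => s(p.1, p.2)) with hT'
    have hcardT' : T'.card = T.card := by
      apply Finset.card_image_of_injOn
      intro p hp q hq hpq
      obtain ⟨hp1, hp2, hp3, hp4, hp5⟩ := hmemT p hp
      obtain ⟨hq1, hq2, hq3, hq4, hq5⟩ := hmemT q hq
      rw [Sym2.eq_iff] at hpq
      rcases hpq with ⟨h1, h2⟩ | ⟨h1, h2⟩
      · exact Prod.ext h1 h2
      · exact absurd (no_tri hfree huv (h1 ▸ hq3) hp1) not_false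
    set Eu : Finset (Sym2 V) := G.incidenceFinset u with hEu
    set Ev : Finset (Sym2 V) := G.incidenceFinset v with hEv
    have hIuv : Eu ∩ Ev = {s(u, v)} := by
      ext f
      simp only [hEu, hEv, mem_inter, SimpleGraph.mem_incidenceFinset,
        SimpleGraph.incidenceSet, Set.mem_setOf_eq, mem_singleton]
      constructor
      · rintro ⟨⟨he, hu⟩, ⟨_, hv⟩⟩
        exact (Sym2.mem_and_mem_iff huv.ne).1 ⟨hu, hv⟩
      · rintro rfl
        exact ⟨⟨huv, Sym2.mem_mk_left u v⟩, huv, Sym2.mem_mk_right u v⟩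
    have hcardUnion : (Eu ∪ Ev).card + 1 = G.degree u + G.degree v := by
      have h := Finset.card_union_add_card_inter Eu Ev
      rw [hIuv, Finset.card_singleton] at h
      have h2 : Eu.card = G.degree u := by
        rw [hEu]; exact G.card_incidenceFinset_eq_degree _
      have h3 : Ev.card = G.degree v := by
        rw [hEv]; exact G.card_incidenceFinset_eq_degree _
      omega
    have hdisj : Disjoint (Eu ∪ Ev) T' := by
      rw [Finset.disjoint_left]
      intro f hf hfT
      simp only [hT', mem_image] at hfT
      obtain ⟨p, hp, rfl⟩ := hfT
      obtain ⟨hp1, hp2, hp3, hp4, hp5⟩ := hmemT p hp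
      simp only [mem_union, hEu, hEv, SimpleGraph.mem_incidenceFinset,
        SimpleGraph.incidenceSet, Set.mem_setOf_eq] at hf
      rcases hf with ⟨_, hu⟩ | ⟨_, hv⟩
      · rcases Sym2.mem_iff.1 hu with rfl | rfl
        · exact hp2 rfl
        · exact (G.irrefl (hp3))
      · rcases Sym2.mem_iff.1 hv with rfl | rfl
        · exact (G.irrefl (hp1))
        · exact hp4 rfl
    have hsub : Eu ∪ Ev ∪ T' ⊆ G.edgeFinset := by
      intro f hf
      rcases mem_union.1 hf with hf | hf
      · rcases mem_union.1 hf with hf | hf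
        · exact SimpleGraph.mem_edgeFinset.2
            ((SimpleGraph.mem_incidenceFinset (G := G) (v := u) f).1 hf).1
        · exact SimpleGraph.mem_edgeFinset.2
            ((SimpleGraph.mem_incidenceFinset (G := G) (v := v) f).1 hf).1
      · simp only [hT', mem_image] at hf
        obtain ⟨p, hp, rfl⟩ := hf
        exact SimpleGraph.mem_edgeFinset.2 ((hmemT p hp).2.2.2.2)
    have hcards : (Eu ∪ Ev ∪ T').card = (Eu ∪ Ev).card + T.card := by
      rw [Finset.card_union_of_disjoint hdisj, hcardT']
    have hle : (Eu ∪ Ev ∪ T').card ≤ m := hm ▸ Finset.card_le_card hsub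
    have hdu : G.degree u = B.card + 1 := by
      have hv : v ∈ G.neighborFinset u := by simpa using huv
      have h1 : B.card = G.degree u - 1 := by
        rw [hB, Finset.card_erase_of_mem hv]; rfl
      have h2 : 1 ≤ G.degree u := Finset.card_pos.2 ⟨v, hv⟩
      omega
    have hdv : G.degree v = A.card + 1 := by
      have hu : u ∈ G.neighborFinset v := by simpa using huv.symm
      have h1 : A.card = G.degree v - 1 := by
        rw [hA, Finset.card_erase_of_mem hu]; rfl
      have h2 : 1 ≤ G.degree v := Finset.card_pos.2 ⟨u, hu⟩
      omega
    omega
  -- Step D : conclude over ℝ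
  set r := Real.sqrt m with hr
  have hr2 : r ^ 2 = m := Real.sq_sqrt (by positivity)
  have hr1 : 1 ≤ r := by
    rw [show (1:ℝ) = Real.sqrt 1 by simp]
    exact Real.sqrt_le_sqrt (by exact_mod_cast hm1)
  have ha0 : (0:ℝ) ≤ A.card := Nat.cast_nonneg _
  have hb0 : (0:ℝ) ≤ B.card := Nat.cast_nonneg _
  have hB' : (T.card : ℝ) ≤ (A.card : ℝ) * B.card := by exact_mod_cast stepB
  have hC' : (A.card : ℝ) + B.card + 1 + T.card ≤ m := by exact_mod_cast stepC
  have hstep : (fourCyclesOn G s(u,v) : ℝ) ≤ T.card := by exact_mod_cast stepA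
  refine hstep.trans ?_
  rcases le_total ((A.card : ℝ) + B.card) (2 * (r - 1)) with hcase | hcase
  · nlinarith [sq_nonneg ((A.card : ℝ) - B.card),
      mul_nonneg (sub_nonneg.2 hcase) (add_nonneg ha0 hb0),
      mul_nonneg (sub_nonneg.2 hcase) (by linarith : (0:ℝ) ≤ 2 * (r - 1))]
  · nlinarith

end Aux

theorem stmt12 [Fintype V] [DecidableEq V] (G : SimpleGraph V) [DecidableRel G.Adj]
    (m : ℕ) (hm : m = G.edgeFinset.card) (hm1 : 1 ≤ m) (hfree : G.CliqueFree 3) :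
    (∀ e ∈ G.edgeSet, (fourCyclesOn G e : ℝ) ≤ (Real.sqrt m - 1) ^ 2) ∧
    (c4 G : ℝ) ≤ (Real.sqrt m - 1) ^ 2 := by
  have part1 : ∀ e ∈ G.edgeSet, (fourCyclesOn G e : ℝ) ≤ (Real.sqrt m - 1) ^ 2 := by
    intro e he
    induction e using Sym2.ind with
    | _ u v =>
      rw [SimpleGraph.mem_edgeSet] at he
      exact edge_bound G m hm hm1 hfree he
  refine ⟨part1, ?_⟩
  have hbdd : BddAbove {r : ℕ | ∃ e ∈ G.edgeSet, r = fourCyclesOn G e} := by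
    refine ⟨m, fun r hr => ?_⟩
    obtain ⟨e, he, rfl⟩ := hr
    have h1 := part1 e he
    have hr1 : 1 ≤ Real.sqrt m := by
      rw [show (1:ℝ) = Real.sqrt 1 by simp]
      exact Real.sqrt_le_sqrt (by exact_mod_cast hm1)
    have hr2 : Real.sqrt m ^ 2 = m := Real.sq_sqrt (by positivity)
    have : (fourCyclesOn G e : ℝ) ≤ m := by nlinarith
    exact_mod_cast this
  rcases Set.eq_empty_or_nonempty {r : ℕ | ∃ e ∈ G.edgeSet, r = fourCyclesOn G e} with h | h
  · have : c4 G = 0 := by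
      rw [c4, h]
      exact csSup_empty
    rw [this]
    simpa using sq_nonneg (Real.sqrt m - 1)
  · have hmem : c4 G ∈ {r : ℕ | ∃ e ∈ G.edgeSet, r = fourCyclesOn G e} :=
      Nat.sSup_mem h hbdd
    obtain ⟨e, he, hEq⟩ := hmem
    rw [hEq]
    exact part1 e he
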